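/- For every vertex k ∈ Fin N, the canonical stabilizer generator fixes the qudit hypergraph state: g_k |H(m)⟩ = |H(m)⟩, where g_k = X_k ∘ ∏_{e : k ∈ e} (C_{e∖{k}}^{-1})^{m(e)} (the exponent being any integer lift of m(e) ∈ ZMod d, which is well defined since C_{e'}^d = id for every hyperedge e'). -/

import Mathlib

open Finset

noncomputable section

/-- The primitive `d`-th root of unity `ω = exp(2πi/d)`. -/
def omega (d : ℕ) : ℂ := Complex.exp (2 * Real.pi * Complex.I / d)

/-- The `N`-qudit Hilbert space, modeled as functions from points to amplitudes. -/
abbrev QV (d N : ℕ) := (Fin N → Fin d) → ℂ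

/-- Diagonal operator with diagonal phase function `φ`. -/
def diagOp (d N : ℕ) (φ : (Fin N → Fin d) → ℂ) : Module.End ℂ (QV d N) where
  toFun ψ := fun i => φ i * ψ i
  map_add' ψ ψ' := by funext i; simp [mul_add]
  map_smul' c ψ := by funext i; simp [smul_eq_mul]; ring

lemma diag_comm (d N : ℕ) (φ φ' : (Fin N → Fin d) → ℂ) :
    Commute (diagOp d N φ) (diagOp d N φ') := by
  apply LinearMap.ext; intro ψ; funext i
  simp [diagOp, Module.End.mul_apply]; ring

/-- The hyperedge operator `C_e`. -/
def Ce (d N : ℕ) (e : Finset (Fin N)) : Module.End ℂ (QV d N) :=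
  diagOp d N fun i => omega d ^ ∏ k ∈ e, (i k : ℕ)

/-- The inverse of the hyperedge operator `C_e`. -/
def CeInv (d N : ℕ) (e : Finset (Fin N)) : Module.End ℂ (QV d N) :=
  diagOp d N fun i => (omega d ^ ∏ k ∈ e, (i k : ℕ))⁻¹

/-- The qudit hypergraph state `|H(m)⟩` for a multiplicity function `m`. -/
def Hstate (d N : ℕ) (m : Finset (Fin N) → ZMod d) : QV d N :=
  fun i => (d : ℂ) ^ (-(N : ℂ)/2) *
    omega d ^ (∑ e : Finset (Fin N), m e * ∏ k ∈ e, ((i k : ℕ) : ZMod d)).val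

/-- The generalized Pauli `X` operator on vertex `k`. -/
def Xop (d N : ℕ) [NeZero d] (k : Fin N) : Module.End ℂ (QV d N) where
  toFun ψ := fun i => ψ (Function.update i k (i k + 1))
  map_add' ψ ψ' := by funext i; simp
  map_smul' c ψ := by funext i; simp

/-- The canonical stabilizer generator
`g_k = X_k ∘ ∏_{e : k ∈ e} (C_{e∖{k}}⁻¹)^{m(e)}` (exponents are the canonical
integer lifts of values in `ZMod d`). -/
def gk (d N : ℕ) [NeZero d] (m : Finset (Fin N) → ZMod d) (k : Fin N) :
    Module.End ℂ (QV d N) :=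
  Xop d N k *
    Finset.noncommProd (Finset.univ.filter fun e : Finset (Fin N) => k ∈ e)
      (fun e => CeInv d N (e.erase k) ^ (m e).val)
      (fun _ _ _ _ _ => (diag_comm d N _ _).pow_pow _ _)


lemma diagOp_one (d N : ℕ) : diagOp d N 1 = 1 := by
  apply LinearMap.ext; intro ψ; funext i; simp [diagOp]

lemma diagOp_mul (d N : ℕ) (φ φ' : (Fin N → Fin d) → ℂ) :
    diagOp d N φ * diagOp d N φ' = diagOp d N (φ * φ') := by
  apply LinearMap.ext; intro ψ; funext i
  simp [diagOp, Module.End.mul_apply, mul_assoc]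

lemma diagOp_pow (d N : ℕ) (φ : (Fin N → Fin d) → ℂ) (n : ℕ) :
    diagOp d N φ ^ n = diagOp d N (φ ^ n) := by
  induction n with
  | zero => simpa using (diagOp_one d N).symm
  | succ n ih => rw [pow_succ, ih, diagOp_mul, ← pow_succ]

lemma noncommProd_diagOp (d N : ℕ) (s : Finset (Finset (Fin N)))
    (f : Finset (Fin N) → (Fin N → Fin d) → ℂ) (comm) :
    s.noncommProd (fun e => diagOp d N (f e)) comm
      = diagOp d N (fun i => ∏ e ∈ s, f e i) := by
  induction s using Finset.cons_induction with
  | empty =>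
      rw [Finset.noncommProd_empty]
      simp only [Finset.prod_empty]
      exact (diagOp_one d N).symm
  | cons a s ha ih =>
      rw [Finset.noncommProd_cons, ih, diagOp_mul]
      congr 1; funext i; rw [Pi.mul_apply, Finset.prod_cons]

/-- Every canonical stabilizer generator fixes the qudit hypergraph
state: `g_k |H(m)⟩ = |H(m)⟩`. -/
theorem gk_fixes_Hstate (d N : ℕ) [NeZero d] (hd : 2 ≤ d) (hN : 1 ≤ N)
    (m : Finset (Fin N) → ZMod d) (k : Fin N) :
    gk d N m k (Hstate d N m) = Hstate d N m := by
  classical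
  have hd0 : d ≠ 0 := NeZero.ne d
  have hζd : omega d ^ d = 1 := by
    rw [omega, ← Complex.exp_nat_mul]
    rw [show (d : ℂ) * (2 * Real.pi * Complex.I / d) = 2 * Real.pi * Complex.I by
      rw [mul_div_assoc']
      exact mul_div_cancel_left₀ _ (Nat.cast_ne_zero.2 hd0)]
    exact Complex.exp_two_pi_mul_I
  have hζ0 : omega d ≠ 0 := Complex.exp_ne_zero _
  have hpowmod : ∀ n : ℕ, omega d ^ n = omega d ^ (n % d) := by
    intro n
    conv_lhs => rw [← Nat.div_add_mod n d, pow_add, pow_mul, hζd, one_pow, one_mul]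
  have hcast : ∀ a b : ℕ, (a : ZMod d) = (b : ZMod d) → omega d ^ a = omega d ^ b := by
    intro a b hab
    have h2 : a % d = b % d := (ZMod.natCast_eq_natCast_iff a b d).1 hab
    rw [hpowmod a, hpowmod b, h2]
  have hCe : ∀ e : Finset (Fin N), CeInv d N (e.erase k) ^ (m e).val
      = diagOp d N fun i => ((omega d ^ ∏ j ∈ e.erase k, (i j : ℕ))⁻¹) ^ (m e).val := by
    intro e
    rw [CeInv, diagOp_pow]
    congr 1
  have hP : (Finset.univ.filter fun e : Finset (Fin N) => k ∈ e).noncommProd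
      (fun e => CeInv d N (e.erase k) ^ (m e).val)
      (fun _ _ _ _ _ => (diag_comm d N _ _).pow_pow _ _)
      = diagOp d N (fun i => ∏ e ∈ Finset.univ.filter fun e : Finset (Fin N) => k ∈ e,
          ((omega d ^ ∏ j ∈ e.erase k, (i j : ℕ))⁻¹) ^ (m e).val) := by
    refine Eq.trans ?_ (noncommProd_diagOp d N _
      (fun e i => ((omega d ^ ∏ j ∈ e.erase k, (i j : ℕ))⁻¹) ^ (m e).val) ?_)
    · congr 1; funext e; exact hCe e
    · intro _ _ _ _ _; exact diag_comm d N _ _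
  rw [gk, Module.End.mul_apply, hP]
  funext i
  set i' : Fin N → Fin d := Function.update i k (i k + 1) with hi'
  have hupd : ∀ j, j ≠ k → i' j = i j := fun j hj => Function.update_of_ne hj _ _
  have hQ : ∀ e : Finset (Fin N),
      (∏ j ∈ e.erase k, ((i' j : ℕ))) = ∏ j ∈ e.erase k, ((i j : ℕ)) := by
    intro e
    exact Finset.prod_congr rfl fun j hj => by rw [hupd j (Finset.ne_of_mem_erase hj)]
  have hck : ((i' k : ℕ) : ZMod d) = ((i k : ℕ) : ZMod d) + 1 := by
    have h0 : i' k = i k + 1 := Function.update_self k _ i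
    have h1 : ((i k + 1 : Fin d) : ℕ) = ((i k : ℕ) + 1) % d := by
      rw [Fin.val_add, Fin.val_one']
      conv_rhs => rw [Nat.add_mod, Nat.mod_eq_of_lt (i k).isLt]
    rw [h0, h1, ZMod.natCast_mod]
    push_cast
    ring
  have hprod_e : ∀ e : Finset (Fin N), k ∈ e →
      (∏ j ∈ e, ((i' j : ℕ) : ZMod d))
        = (∏ j ∈ e, ((i j : ℕ) : ZMod d)) + ∏ j ∈ e.erase k, ((i j : ℕ) : ZMod d) := by
    intro e hke
    rw [← Finset.prod_erase_mul e _ hke, ← Finset.prod_erase_mul e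
      (fun j => ((i j : ℕ) : ZMod d)) hke]
    have herase : (∏ j ∈ e.erase k, ((i' j : ℕ) : ZMod d))
        = ∏ j ∈ e.erase k, ((i j : ℕ) : ZMod d) :=
      Finset.prod_congr rfl fun j hj => by rw [hupd j (Finset.ne_of_mem_erase hj)]
    rw [herase, hck]
    ring
  have hsum : (∑ e : Finset (Fin N), m e * ∏ j ∈ e, ((i' j : ℕ) : ZMod d))
      = (∑ e : Finset (Fin N), m e * ∏ j ∈ e, ((i j : ℕ) : ZMod d))
        + ∑ e ∈ Finset.univ.filter (fun e : Finset (Fin N) => k ∈ e),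
            m e * ∏ j ∈ e.erase k, ((i j : ℕ) : ZMod d) := by
    rw [← Finset.sum_filter_add_sum_filter_not Finset.univ (fun e : Finset (Fin N) => k ∈ e)
          (fun e => m e * ∏ j ∈ e, ((i' j : ℕ) : ZMod d)),
        ← Finset.sum_filter_add_sum_filter_not Finset.univ (fun e : Finset (Fin N) => k ∈ e)
          (fun e => m e * ∏ j ∈ e, ((i j : ℕ) : ZMod d))]
    have h1 : (∑ e ∈ Finset.univ.filter (fun e : Finset (Fin N) => ¬ k ∈ e),
          m e * ∏ j ∈ e, ((i' j : ℕ) : ZMod d))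
        = ∑ e ∈ Finset.univ.filter (fun e : Finset (Fin N) => ¬ k ∈ e),
            m e * ∏ j ∈ e, ((i j : ℕ) : ZMod d) := by
      refine Finset.sum_congr rfl fun e he => ?_
      have hke : k ∉ e := (Finset.mem_filter.1 he).2
      congr 1
      exact Finset.prod_congr rfl fun j hj => by
        rw [hupd j (by rintro rfl; exact hke hj)]
    have h2 : (∑ e ∈ Finset.univ.filter (fun e : Finset (Fin N) => k ∈ e),
          m e * ∏ j ∈ e, ((i' j : ℕ) : ZMod d))
        = ∑ e ∈ Finset.univ.filter (fun e : Finset (Fin N) => k ∈ e),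
            (m e * ∏ j ∈ e, ((i j : ℕ) : ZMod d)
              + m e * ∏ j ∈ e.erase k, ((i j : ℕ) : ZMod d)) := by
      refine Finset.sum_congr rfl fun e he => ?_
      rw [hprod_e e (Finset.mem_filter.1 he).2, mul_add]
    rw [h1, h2, Finset.sum_add_distrib]
    ring
  have hSS : omega d ^ (∑ e : Finset (Fin N), m e * ∏ j ∈ e, ((i' j : ℕ) : ZMod d)).val
      = omega d ^ (∑ e : Finset (Fin N), m e * ∏ j ∈ e, ((i j : ℕ) : ZMod d)).val
        * omega d ^ ∑ e ∈ Finset.univ.filter (fun e : Finset (Fin N) => k ∈ e),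
            (m e).val * ∏ j ∈ e.erase k, (i j : ℕ) := by
    rw [← pow_add]
    apply hcast
    push_cast [ZMod.natCast_val, ZMod.cast_id]
    exact hsum
  have hone : (∏ e ∈ Finset.univ.filter (fun e : Finset (Fin N) => k ∈ e),
        ((omega d ^ ∏ j ∈ e.erase k, (i j : ℕ))⁻¹) ^ (m e).val)
      * ∏ e ∈ Finset.univ.filter (fun e : Finset (Fin N) => k ∈ e),
          omega d ^ ((m e).val * ∏ j ∈ e.erase k, (i j : ℕ)) = 1 := by
    rw [← Finset.prod_mul_distrib]
    apply Finset.prod_eq_one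
    intro e _
    rw [inv_pow, ← pow_mul, mul_comm (∏ j ∈ e.erase k, (i j : ℕ)) ((m e).val)]
    exact inv_mul_cancel₀ (pow_ne_zero _ hζ0)
  show (∏ e ∈ Finset.univ.filter fun e : Finset (Fin N) => k ∈ e,
      ((omega d ^ ∏ j ∈ e.erase k, (i' j : ℕ))⁻¹) ^ (m e).val) * Hstate d N m i'
      = Hstate d N m i
  have hΦ : (∏ e ∈ Finset.univ.filter fun e : Finset (Fin N) => k ∈ e,
        ((omega d ^ ∏ j ∈ e.erase k, (i' j : ℕ))⁻¹) ^ (m e).val)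
      = ∏ e ∈ Finset.univ.filter fun e : Finset (Fin N) => k ∈ e,
          ((omega d ^ ∏ j ∈ e.erase k, (i j : ℕ))⁻¹) ^ (m e).val :=
    Finset.prod_congr rfl fun e _ => by rw [hQ e]
  rw [hΦ, Hstate, Hstate, hSS, ← Finset.prod_pow_eq_pow_sum]
  calc _ = ((∏ e ∈ Finset.univ.filter (fun e : Finset (Fin N) => k ∈ e),
        ((omega d ^ ∏ j ∈ e.erase k, (i j : ℕ))⁻¹) ^ (m e).val)
      * ∏ e ∈ Finset.univ.filter (fun e : Finset (Fin N) => k ∈ e),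
          omega d ^ ((m e).val * ∏ j ∈ e.erase k, (i j : ℕ)))
      * ((d : ℂ) ^ (-(N : ℂ)/2)
        * omega d ^ (∑ e : Finset (Fin N), m e * ∏ j ∈ e, ((i j : ℕ) : ZMod d)).val) := by
        ring
    _ = _ := by rw [hone, one_mul]


end
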